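/- Consider the MaxCut feasible set: $\mathcal{M}_p = \{V \in \mathbb{R}^{n \times p} : \mathrm{diag}(VV^T) = \mathbf{1}\}$ (each row of $V$ has unit norm), with $n \geq \frac{p(p+1)}{2} + p$. Let $V \in \mathcal{M}_p$ have rows: $V_{i,:} = e_i$ and $V_{p+i,:} = -e_i$ for $i \leq p$, $V_{2p+\phi(i,j),:} = (e_i + e_j)/\sqrt{2}$ for $1 \leq i < j \leq p$ (with $\phi$ a bijection onto $\{1,\dots,p(p-1)/2\}$), and arbitrary unit rows after. Let $U_0 = \mathbf{1}_{n \times 1}$. If $\dot{V} = U_0 R + VA'$ for some $R \in \mathbb{R}^{1 \times p}$, $A' \in \mathbb{R}^{p \times p}$, and $\mathrm{diag}(V\dot{V}^T + \dot{V}V^T) = 0$, then $R = 0$ and $A'$ is antisymmetric. -/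
import Mathlib


open Matrix

/-- MaxCut: for the special feasible point `V` (with rows `e_i`, `-e_i`,
`(e_i+e_j)/√2` at distinct positions, and arbitrary unit-norm rows elsewhere),
any matrix `V̇ = U0 R + V A'` (with `U0` the all-ones column) satisfying the
tangency condition `diag(V V̇ᵀ + V̇ Vᵀ) = 0` must have `R = 0` and `A'`
antisymmetric. -/
theorem stmt13 {n p : ℕ} (hn : p * (p + 1) / 2 + p ≤ n)
    (V : Matrix (Fin n) (Fin p) ℝ)
    (ρ : (Fin p ⊕ Fin p ⊕ {q : Fin p × Fin p // q.1 < q.2}) → Fin n)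
    (hρ : Function.Injective ρ)
    (h1 : ∀ i : Fin p, V (ρ (Sum.inl i)) = Pi.single i 1)
    (h2 : ∀ i : Fin p, V (ρ (Sum.inr (Sum.inl i))) = -Pi.single i 1)
    (h3 : ∀ q : {q : Fin p × Fin p // q.1 < q.2},
      V (ρ (Sum.inr (Sum.inr q))) =
        (Real.sqrt 2)⁻¹ • (Pi.single q.1.1 1 + Pi.single q.1.2 1))
    (hunit : ∀ k : Fin n, ∑ j, V k j ^ 2 = 1)
    (R : Matrix (Fin 1) (Fin p) ℝ) (A' : Matrix (Fin p) (Fin p) ℝ)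
    (Vdot : Matrix (Fin n) (Fin p) ℝ)
    (hVdot : Vdot = (Matrix.of fun (_ : Fin n) (_ : Fin 1) => (1 : ℝ)) * R + V * A')
    (hdiag : ∀ k : Fin n, (V * Vdotᵀ + Vdot * Vᵀ) k k = 0) :
    R = 0 ∧ A'ᵀ = -A' := by
  have hVd : ∀ k j, Vdot k j = R 0 j + ∑ m, V k m * A' m j := by
    intro k j
    simp [hVdot, Matrix.add_apply, Matrix.mul_apply, Fin.sum_univ_one]
  have hd : ∀ k : Fin n, ∑ j, V k j * Vdot k j = 0 := by
    intro k
    have h2' : ∑ j, V k j * Vdot k j + ∑ j, Vdot k j * V k j = 0 := by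
      have := hdiag k
      simpa only [Matrix.add_apply, Matrix.mul_apply, Matrix.transpose_apply] using this
    rw [show ∑ j, Vdot k j * V k j = ∑ j, V k j * Vdot k j from
      Finset.sum_congr rfl fun j _ => mul_comm _ _] at h2'
    linarith
  have single_sum : ∀ (f : Fin p → ℝ) (i : Fin p),
      ∑ j, (Pi.single i 1 : Fin p → ℝ) j * f j = f i := by
    intro f i
    simp [Pi.single_apply]
  have pair_sum : ∀ (f : Fin p → ℝ) (i j : Fin p),
      ∑ m, (Pi.single i 1 + Pi.single j 1 : Fin p → ℝ) m * f m = f i + f j := by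
    intro f i j
    simp [Pi.add_apply, add_mul, Finset.sum_add_distrib, single_sum]
  have E1 : ∀ i : Fin p, R 0 i + A' i i = 0 := by
    intro i
    have h := hd (ρ (Sum.inl i))
    simp only [h1, hVd, single_sum] at h
    simpa [h1, single_sum] using h
  have E2 : ∀ i : Fin p, A' i i - R 0 i = 0 := by
    intro i
    have h := hd (ρ (Sum.inr (Sum.inl i)))
    simp only [h2, hVd, Pi.neg_apply, neg_mul, mul_neg,
      Finset.sum_neg_distrib, single_sum, neg_neg] at h
    linarith
  have hR : ∀ i, R 0 i = 0 := fun i => by linarith [E1 i, E2 i]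
  have hAd : ∀ i, A' i i = 0 := fun i => by linarith [E1 i, E2 i]
  have hs : (Real.sqrt 2)⁻¹ ≠ 0 := by positivity
  have E3 : ∀ i j : Fin p, i < j → A' i j + A' j i = 0 := by
    intro i j hij
    set k := ρ (Sum.inr (Sum.inr ⟨(i, j), hij⟩)) with hk
    have hVdk : ∀ x, Vdot k x = (Real.sqrt 2)⁻¹ * (A' i x + A' j x) := by
      intro x
      rw [hVd, hR]
      have : ∑ m, V k m * A' m x
          = (Real.sqrt 2)⁻¹ * ∑ m, (Pi.single i 1 + Pi.single j 1 : Fin p → ℝ) m * A' m x := by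
        rw [Finset.mul_sum]
        refine Finset.sum_congr rfl fun m _ => ?_
        rw [hk, h3]
        simp [mul_assoc]
      rw [this, pair_sum]
      ring
    have h := hd k
    have h' : (Real.sqrt 2)⁻¹ * ∑ x, (Pi.single i 1 + Pi.single j 1 : Fin p → ℝ) x * Vdot k x = 0 := by
      rw [Finset.mul_sum]
      rw [show ∑ x, (Real.sqrt 2)⁻¹ * ((Pi.single i 1 + Pi.single j 1 : Fin p → ℝ) x * Vdot k x)
          = ∑ x, V k x * Vdot k x from Finset.sum_congr rfl fun x _ => by
        rw [hk, h3]; simp [mul_assoc]]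
      exact h
    rw [pair_sum] at h'
    have h'' := (mul_eq_zero.mp h').resolve_left hs
    rw [hVdk, hVdk, hAd, hAd] at h''
    have h3' : (Real.sqrt 2)⁻¹ * (A' j i + A' i j) = 0 := by linarith
    have := (mul_eq_zero.mp h3').resolve_left hs
    linarith
  refine ⟨?_, ?_⟩
  · ext a j
    have : a = 0 := Subsingleton.elim a 0
    rw [this]
    simpa using hR j
  · ext a b
    simp only [Matrix.transpose_apply, Matrix.neg_apply]
    rcases lt_trichotomy a b with h | h | h
    · linarith [E3 a b h]
    · rw [h]; simp [hAd b]
    · linarith [E3 b a h]
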